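/- arXiv:1001.0926 — 5 statements merged into one kernel-verified Lean document; each statement's English description precedes it below -/
import Mathlib

section
/- Let ξ = e^{2πi/8}. There is no element q in the field ℚ(ξ) with q·conj(q) = 2115. -/
lemma zmod47_neg_sq : ∀ m u : ZMod 47, -m^2 = 2*u^2 → m = 0 := by decide
lemma zmod47_sum_sq : ∀ a c : ZMod 47, a^2+c^2 = 0 → a = 0 ∧ c = 0 := by decide

lemma descent : ∀ (k : ℕ) (n A B C D U : ℤ), n.natAbs = k → n ≠ 0 →
    (A^2+C^2) + (B^2+D^2) = 2115 * n^2 →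
    (A^2+C^2) * (B^2+D^2) = 2 * U^2 → False := by
  intro k
  induction k using Nat.strong_induction_on with
  | _ k ih =>
  intro n A B C D U hk hn h1 h2
  have hp : Prime (47 : ℤ) := by norm_num
  -- cast to ZMod 47
  have e1 : ((A:ZMod 47)^2+(C:ZMod 47)^2) + ((B:ZMod 47)^2+(D:ZMod 47)^2) = 0 := by
    have := congrArg (Int.cast : ℤ → ZMod 47) h1
    push_cast at this
    rw [this]
    have : (2115 : ZMod 47) = 0 := by decide
    rw [this]; ring
  have e2 : ((A:ZMod 47)^2+(C:ZMod 47)^2) * ((B:ZMod 47)^2+(D:ZMod 47)^2) = 2 * (U:ZMod 47)^2 := by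
    have := congrArg (Int.cast : ℤ → ZMod 47) h2
    push_cast at this
    exact this
  have eN : ((B:ZMod 47)^2+(D:ZMod 47)^2) = -((A:ZMod 47)^2+(C:ZMod 47)^2) := by
    linear_combination e1
  rw [eN] at e2
  have eM : ((A:ZMod 47)^2+(C:ZMod 47)^2) = 0 := by
    have hsq : -(((A:ZMod 47)^2+(C:ZMod 47)^2))^2 = 2 * (U:ZMod 47)^2 := by
      linear_combination e2
    have := zmod47_neg_sq _ _ hsq
    exact this
  have eN0 : ((B:ZMod 47)^2+(D:ZMod 47)^2) = 0 := by rw [eN, eM, neg_zero]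
  obtain ⟨hA0, hC0⟩ := zmod47_sum_sq _ _ eM
  obtain ⟨hB0, hD0⟩ := zmod47_sum_sq _ _ eN0
  rw [ZMod.intCast_zmod_eq_zero_iff_dvd] at hA0 hB0 hC0 hD0
  obtain ⟨A', rfl⟩ := hA0
  obtain ⟨B', rfl⟩ := hB0
  obtain ⟨C', rfl⟩ := hC0
  obtain ⟨D', rfl⟩ := hD0
  -- 47 ∣ n
  have h47n : (47:ℤ) ∣ n := by
    have hd : (47:ℤ) ∣ 45 * n^2 := by
      refine ⟨A'^2+C'^2+B'^2+D'^2, ?_⟩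
      have h : (47:ℤ) * (45 * n^2) = 47 * (47 * (A'^2+C'^2+B'^2+D'^2)) := by
        linear_combination -h1
      exact mul_left_cancel₀ (by norm_num) h
    rcases hp.dvd_mul.mp hd with h | h
    · norm_num at h
    · exact hp.dvd_of_dvd_pow h
  obtain ⟨n', rfl⟩ := h47n
  -- 47^2 ∣ U
  have hU : (47:ℤ)^2 ∣ U := by
    have hd4 : (47:ℤ)^4 ∣ 2 * U^2 := by
      refine ⟨(A'^2+C'^2)*(B'^2+D'^2), ?_⟩
      linear_combination -h2
    have hcop : IsCoprime ((47:ℤ)^4) 2 := by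
      rw [Int.isCoprime_iff_gcd_eq_one]
      norm_num
    have : (47:ℤ)^4 ∣ U^2 := hcop.dvd_of_dvd_mul_left hd4
    have h44 : ((47:ℤ)^2)^2 ∣ U^2 := by
      rw [(by ring : ((47:ℤ)^2)^2 = (47:ℤ)^4)]
      exact this
    exact (Int.pow_dvd_pow_iff (two_ne_zero)).mp h44
  obtain ⟨U', rfl⟩ := hU
  have hn' : n' ≠ 0 := by rintro rfl; simp at hn
  have h1' : (A'^2+C'^2) + (B'^2+D'^2) = 2115 * n'^2 := by
    have h : (47:ℤ)^2 * ((A'^2+C'^2) + (B'^2+D'^2)) = (47:ℤ)^2 * (2115 * n'^2) := by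
      linear_combination h1
    exact mul_left_cancel₀ (by norm_num) h
  have h2' : (A'^2+C'^2) * (B'^2+D'^2) = 2 * U'^2 := by
    have h : (47:ℤ)^4 * ((A'^2+C'^2) * (B'^2+D'^2)) = (47:ℤ)^4 * (2 * U'^2) := by
      linear_combination h2
    exact mul_left_cancel₀ (by norm_num) h
  have hlt : n'.natAbs < k := by
    subst hk
    have : (47 * n').natAbs = 47 * n'.natAbs := by
      rw [Int.natAbs_mul]; rfl
    rw [this]
    have h1 : 0 < n'.natAbs := Int.natAbs_pos.mpr hn'
    omega
  exact ih n'.natAbs hlt n' A' B' C' D' U' rfl hn' h1' h2'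

lemma rat_core (a b c d : ℚ) (h1 : a^2+b^2+c^2+d^2 = 2115)
    (h2 : a*b + b*c + c*d - a*d = 0) : False := by
  set n : ℚ := ((a.den * b.den * c.den * d.den : ℤ) : ℚ) with hn_def
  have hden : ∀ q : ℚ, (q.den : ℚ) ≠ 0 := fun q => by exact_mod_cast q.den_nz
  have hn0 : n ≠ 0 := by
    simp only [hn_def]
    push_cast
    simp [Rat.den_ne_zero]
  -- integer numerators
  have key : ∀ q : ℚ, ∃ A : ℤ, (A:ℚ) = q * q.den := fun q =>
    ⟨q.num, (div_eq_iff (hden q)).mp (Rat.num_div_den q)⟩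
  obtain ⟨A, hA⟩ : ∃ A : ℤ, (A:ℚ) = a * n := by
    obtain ⟨A0, h⟩ := key a
    exact ⟨A0 * (b.den * c.den * d.den), by push_cast [hn_def]; push_cast at h; linear_combination ((b.den:ℚ) * (c.den:ℚ) * (d.den:ℚ)) * h⟩
  obtain ⟨B, hB⟩ : ∃ B : ℤ, (B:ℚ) = b * n := by
    obtain ⟨B0, h⟩ := key b
    exact ⟨B0 * (a.den * c.den * d.den), by push_cast [hn_def]; push_cast at h; linear_combination ((a.den:ℚ) * (c.den:ℚ) * (d.den:ℚ)) * h⟩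
  obtain ⟨C, hC⟩ : ∃ C : ℤ, (C:ℚ) = c * n := by
    obtain ⟨C0, h⟩ := key c
    exact ⟨C0 * (a.den * b.den * d.den), by push_cast [hn_def]; push_cast at h; linear_combination ((a.den:ℚ) * (b.den:ℚ) * (d.den:ℚ)) * h⟩
  obtain ⟨D, hD⟩ : ∃ D : ℤ, (D:ℚ) = d * n := by
    obtain ⟨D0, h⟩ := key d
    exact ⟨D0 * (a.den * b.den * c.den), by push_cast [hn_def]; push_cast at h; linear_combination ((a.den:ℚ) * (b.den:ℚ) * (c.den:ℚ)) * h⟩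
  set N : ℤ := (a.den * b.den * c.den * d.den : ℤ) with hN_def
  have hNn : ((N:ℚ)) = n := rfl
  have hN0 : N ≠ 0 := by
    intro h
    apply hn0
    rw [← hNn, h]; simp
  have e1 : (A^2+C^2) + (B^2+D^2) = 2115 * N^2 := by
    have : ((A:ℚ)^2+(C:ℚ)^2) + ((B:ℚ)^2+(D:ℚ)^2) = 2115 * (N:ℚ)^2 := by
      rw [hA, hB, hC, hD, hNn]
      linear_combination n^2 * h1
    exact_mod_cast this
  have e2 : (A^2+C^2) * (B^2+D^2) = 2 * (A*B+C*D)^2 := by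
    have : ((A:ℚ)^2+(C:ℚ)^2) * ((B:ℚ)^2+(D:ℚ)^2) = 2 * ((A:ℚ)*(B:ℚ)+(C:ℚ)*(D:ℚ))^2 := by
      rw [hA, hB, hC, hD]
      linear_combination (n^4 * (-(a*d) + b*c - a*b - c*d)) * h2
    exact_mod_cast this
  exact descent N.natAbs N A B C D (A*B+C*D) rfl hN0 e1 e2

/-- There is no `q` in the field `ℚ(ξ)`, `ξ = e^{2πi/8}`, with
`q·conj(q) = 2115`. -/
theorem no_norm_2115_in_Q_xi :
    let ξ : ℂ := Complex.exp (2 * Real.pi * Complex.I / 8)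
    ¬ ∃ q ∈ Subfield.closure ({ξ} : Set ℂ), q * (starRingEnd ℂ) q = 2115 := by
  intro ξ
  rintro ⟨q, hq, hnorm⟩
  -- basic facts about ξ
  have hξ4 : ξ ^ 4 = -1 := by
    show Complex.exp (2 * Real.pi * Complex.I / 8) ^ 4 = -1
    rw [← Complex.exp_nat_mul]
    rw [show (4:ℕ) * (2 * (Real.pi:ℂ) * Complex.I / 8) = Real.pi * Complex.I by push_cast; ring]
    exact Complex.exp_pi_mul_I
  have hξ0 : ξ ≠ 0 := Complex.exp_ne_zero _
  have hξval : ξ = (Real.sqrt 2 / 2 : ℝ) * (1 + Complex.I) := by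
    show Complex.exp (2 * Real.pi * Complex.I / 8) = _
    rw [show (2 * (Real.pi:ℂ) * Complex.I / 8) = (↑(Real.pi/4)) * Complex.I by push_cast; ring]
    rw [Complex.exp_mul_I]
    rw [← Complex.ofReal_cos, ← Complex.ofReal_sin]
    rw [Real.cos_pi_div_four, Real.sin_pi_div_four]
    ring
  have hξ2 : ξ ^ 2 = Complex.I := by
    rw [hξval]
    have h2 : ((Real.sqrt 2 : ℝ) : ℂ) ^ 2 = 2 := by
      rw [← Complex.ofReal_pow, Real.sq_sqrt (by norm_num : (2:ℝ) ≥ 0)]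
      norm_num
    have hI : Complex.I ^ 2 = -1 := Complex.I_sq
    push_cast
    ring_nf
    rw [hI] at *
    linear_combination (Complex.I/2) * h2
  have hsqrt : ξ - ξ ^ 3 = ((Real.sqrt 2 : ℝ) : ℂ) := by
    have : ξ - ξ^3 = ξ * (1 - ξ^2) := by ring
    rw [this, hξ2, hξval]
    have hI : Complex.I * Complex.I = -1 := Complex.I_mul_I
    have h2 : ((Real.sqrt 2 : ℝ) : ℂ) * ((Real.sqrt 2 : ℝ) : ℂ) = 2 := by
      rw [← Complex.ofReal_mul, Real.mul_self_sqrt (by norm_num : (2:ℝ) ≥ 0)]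
      norm_num
    push_cast
    linear_combination (-(((Real.sqrt 2:ℝ):ℂ))/2) * hI
  -- conjugation
  have hconj : (starRingEnd ℂ) ξ = -ξ^3 := by
    have habs : ξ * (starRingEnd ℂ) ξ = 1 := by
      rw [Complex.mul_conj]
      have : ‖ξ‖ = 1 := by
        show ‖(Complex.exp _)‖ = 1
        rw [Complex.norm_exp]
        have : (2 * (Real.pi:ℂ) * Complex.I / 8).re = 0 := by simp
        rw [this, Real.exp_zero]
      rw [show Complex.normSq ξ = ‖ξ‖^2 from (Complex.sq_norm ξ).symm, this]
      norm_num
    have h2 : ξ * (-ξ^3) = 1 := by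
      rw [show ξ * (-ξ^3) = -(ξ^4) by ring, hξ4]; norm_num
    exact mul_left_cancel₀ hξ0 (habs.trans h2.symm)
  -- representation of q
  obtain ⟨a, b, c, d, hq_eq⟩ : ∃ a b c d : ℚ, q = (a:ℂ) + b * ξ + c * ξ^2 + d * ξ^3 := by
    have hint : IsIntegral ℚ ξ := by
      refine ⟨Polynomial.X^4 + 1, ?_, ?_⟩
      · have : (Polynomial.X^4 + 1 : Polynomial ℚ) = Polynomial.X^4 + Polynomial.C 1 := by
          simp
        rw [this]
        exact Polynomial.monic_X_pow_add_C 1 (by norm_num)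
      · simp [Polynomial.eval₂, hξ4]
    -- q lies in the intermediate field adjoin ℚ {ξ}
    have hK : q ∈ IntermediateField.adjoin ℚ ({ξ} : Set ℂ) := by
      have hle : Subfield.closure ({ξ} : Set ℂ) ≤ (IntermediateField.adjoin ℚ ({ξ} : Set ℂ)).toSubfield := by
        rw [Subfield.closure_le]
        intro x hx
        rcases hx with rfl
        exact IntermediateField.subset_adjoin ℚ _ rfl
      exact hle hq
    have hsubalg : q ∈ Algebra.adjoin ℚ ({ξ} : Set ℂ) := by
      have := IntermediateField.adjoin_simple_toSubalgebra_of_isAlgebraic hint.isAlgebraic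
      have h2 : q ∈ (IntermediateField.adjoin ℚ ({ξ} : Set ℂ)).toSubalgebra := hK
      rwa [this] at h2
    rw [Algebra.adjoin_singleton_eq_range_aeval] at hsubalg
    obtain ⟨p, hp⟩ := hsubalg
    -- reduce p mod X^4 + 1
    set m : Polynomial ℚ := Polynomial.X^4 + 1 with hm_def
    have hmonic : m.Monic := by
      rw [hm_def, show (Polynomial.X^4 + 1 : Polynomial ℚ) = Polynomial.X^4 + Polynomial.C 1 by simp]
      exact Polynomial.monic_X_pow_add_C 1 (by norm_num)
    set r : Polynomial ℚ := p %ₘ m with hr_def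
    have haevalm : Polynomial.aeval ξ m = 0 := by
      rw [hm_def]; simp [hξ4]
    have hqr : q = Polynomial.aeval ξ r := by
      have := Polynomial.modByMonic_add_div p m
      have h2 : Polynomial.aeval ξ (p %ₘ m + m * (p /ₘ m)) = Polynomial.aeval ξ p := by rw [this]
      rw [map_add, map_mul, haevalm, zero_mul, add_zero] at h2
      rw [hr_def, h2]
      exact hp.symm
    have hdeg : r.natDegree < 4 := by
      by_cases hr0 : r = 0
      · rw [hr0]; simp
      · rw [Polynomial.natDegree_lt_iff_degree_lt hr0]
        have := Polynomial.degree_modByMonic_lt p hmonic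
        have hdm : m.degree = 4 := by
          rw [hm_def, show (Polynomial.X^4 + 1 : Polynomial ℚ) = Polynomial.X^4 + Polynomial.C 1 by simp]
          exact Polynomial.degree_X_pow_add_C (by norm_num) 1
        rw [← hr_def] at this
        rw [hdm] at this
        exact_mod_cast this
    have hsum := Polynomial.aeval_eq_sum_range' hdeg ξ
    rw [hqr, hsum]
    refine ⟨r.coeff 0, r.coeff 1, r.coeff 2, r.coeff 3, ?_⟩
    rw [Finset.sum_range_succ, Finset.sum_range_succ, Finset.sum_range_succ, Finset.sum_range_succ,
      Finset.sum_range_zero]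
    simp [Rat.smul_def]
  -- compute conj q
  have hconjq : (starRingEnd ℂ) q = (a:ℂ) - d * ξ - c * ξ^2 - b * ξ^3 := by
    rw [hq_eq]
    simp only [map_add, map_mul, map_pow, hconj]
    rw [map_ratCast, map_ratCast, map_ratCast, map_ratCast]
    linear_combination ((c:ℂ)*ξ^2 - (d:ℂ)*ξ^5 + (d:ℂ)*ξ) * hξ4
  -- derive the norm equation
  have hSt : ((a^2+b^2+c^2+d^2 : ℚ) : ℂ) + ((a*b + b*c + c*d - a*d : ℚ) : ℂ) * (ξ - ξ^3) = 2115 := by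
    rw [← hnorm, hconjq, hq_eq]
    push_cast
    linear_combination (((b:ℂ)^2 + (c:ℂ)^2 + (d:ℂ)^2) + ((b:ℂ)*(c:ℂ) + (c:ℂ)*(d:ℂ))*ξ + ((b:ℂ)*(d:ℂ))*ξ^2) * hξ4
  rw [hsqrt] at hSt
  -- take real parts: S + t √2 = 2115 over ℝ
  set S : ℚ := a^2+b^2+c^2+d^2 with hS_def
  set t : ℚ := a*b + b*c + c*d - a*d with ht_def
  have hreal : (S:ℝ) + (t:ℝ) * Real.sqrt 2 = 2115 := by
    have h := hSt
    rw [show ((S:ℚ):ℂ) = (((S:ℝ)):ℂ) by push_cast; ring,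
        show ((t:ℚ):ℂ) = (((t:ℝ)):ℂ) by push_cast; ring,
        show (2115:ℂ) = (((2115:ℝ)):ℂ) by push_cast; ring] at h
    rw [← Complex.ofReal_mul, ← Complex.ofReal_add] at h
    exact_mod_cast h
  have ht0 : t = 0 := by
    by_contra ht
    have : Real.sqrt 2 = ((2115 - S) / t : ℚ) := by
      have htR : (t:ℝ) ≠ 0 := by exact_mod_cast ht
      push_cast
      field_simp
      linarith [hreal]
    exact irrational_sqrt_two ⟨_, this.symm⟩
  have hS : S = 2115 := by
    rw [ht0] at hreal
    push_cast at hreal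
    have h : (S:ℝ) = 2115 := by linarith
    exact_mod_cast h
  exact rat_core a b c d hS (ht0)
end

section
/- The Laurent polynomial t⁻¹ − 3 + t ∈ ℤ[t, t⁻¹] cannot be written in the form ± t^k · f(t) · f(t⁻¹) for any f ∈ ℤ[t, t⁻¹] and k ∈ ℤ. -/
open LaurentPolynomial

/-- The ring automorphism of `ℤ[t,t⁻¹]` given by `t ↦ t⁻¹`. -/
noncomputable def laurentInvert : LaurentPolynomial ℤ ≃ₐ[ℤ] LaurentPolynomial ℤ :=
  AddMonoidAlgebra.domCongr ℤ ℤ (AddEquiv.neg ℤ)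

/-- Evaluation of an integral Laurent polynomial at a unit of `ℤ`. -/
noncomputable def laurentEvalUnit (u : ℤˣ) : LaurentPolynomial ℤ →ₐ[ℤ] ℤ :=
  AddMonoidAlgebra.lift ℤ ℤ ℤ ((Units.coeHom ℤ).comp (zpowersHom ℤˣ u))

lemma laurentEvalUnit_T (u : ℤˣ) (n : ℤ) :
    laurentEvalUnit u (T n) = ((u ^ n : ℤˣ) : ℤ) := by
  have : (T n : LaurentPolynomial ℤ) = AddMonoidAlgebra.single n 1 := rfl
  rw [laurentEvalUnit, this, AddMonoidAlgebra.lift_single]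
  simp

lemma laurentEvalUnit_invert (u : ℤˣ) (hu : u⁻¹ = u) (f : LaurentPolynomial ℤ) :
    laurentEvalUnit u (laurentInvert f) = laurentEvalUnit u f := by
  have : (laurentEvalUnit u).comp laurentInvert.toAlgHom = laurentEvalUnit u := by
    apply AddMonoidAlgebra.algHom_ext
    intro n
    have h1 : (AddMonoidAlgebra.single n (1:ℤ) : LaurentPolynomial ℤ) = T n := rfl
    have h2 : laurentInvert (T n : LaurentPolynomial ℤ) = T (-n) :=
      LaurentPolynomial.invert_T n
    simp only [AlgHom.coe_comp, Function.comp_apply, AlgEquiv.toAlgHom_eq_coe,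
      AlgHom.coe_coe, h1, h2, laurentEvalUnit_T]
    rw [AlgEquiv.coe_algHom, h2, laurentEvalUnit_T, zpow_neg, ← inv_zpow, hu]
    exact Subsingleton.elim _ _
  exact DFunLike.congr_fun this f

/-- The Laurent polynomial `t⁻¹ − 3 + t ∈ ℤ[t,t⁻¹]` cannot be written
as `± t^k · f(t) · f(t⁻¹)` for any `f ∈ ℤ[t,t⁻¹]` and `k ∈ ℤ` (Fox–Milnor condition
for the figure eight knot). -/
theorem figure_eight_not_fox_milnor :
    ¬ ∃ (f : LaurentPolynomial ℤ) (k : ℤ) (ε : ℤ), (ε = 1 ∨ ε = -1) ∧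
      (T (-1) - 3 + T 1 : LaurentPolynomial ℤ) =
        ε • (T k * f * laurentInvert f) := by
  rintro ⟨f, k, ε, hε, h⟩
  have h1 := congrArg (laurentEvalUnit 1) h
  have h2 := congrArg (laurentEvalUnit (-1)) h
  set a := laurentEvalUnit 1 f with ha
  set b := laurentEvalUnit (-1) f with hb
  simp only [map_add, map_sub, map_mul, map_zsmul, map_ofNat, laurentEvalUnit_T,
    laurentEvalUnit_invert 1 rfl, laurentEvalUnit_invert (-1) (by decide),
    one_zpow, Units.val_one, smul_eq_mul] at h1 h2
  rw [← ha] at h1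
  rw [← hb] at h2
  have e1 : Units.val ((-1:ℤˣ)^(-1:ℤ)) = -1 := by decide
  have e2 : Units.val ((-1:ℤˣ)^(1:ℤ)) = -1 := by decide
  rw [e1, e2] at h2
  rcases Int.units_eq_one_or ((-1:ℤˣ)^k) with hs | hs <;> rw [hs] at h2 <;>
    simp only [Units.val_one, Units.val_neg] at h2 <;>
    rcases hε with rfl | rfl <;>
    first
    | nlinarith [sq_nonneg a, sq_nonneg b]
    | (have hb5 : b * b = 5 := by linarith
       have h5 : b ∣ 5 := ⟨b, hb5.symm⟩
       have hub : b ≤ 5 := Int.le_of_dvd (by norm_num) h5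
       have hlb : (-5:ℤ) ≤ b := by
         have := Int.le_of_dvd (by norm_num : (0:ℤ) < 5) ((neg_dvd).mpr h5)
         linarith
       interval_cases b <;> omega)
end

section
/- Let ξ = e^{2πi/8} and let X, Y be the 8×8 matrices from the Bing double computation (X with nonzero entries X₁₄ = ξ, X₂₁ = 1, X₃₂ = 1, X₄₃ = −i, X₅₈ = ξ, X₆₅ = −1, X₇₆ = 1, X₈₇ = −ξ; Y with nonzero entries Y₁₅ = ξ, Y₂₈ = −i, Y₃₇ = ξ³, Y₄₆ = ξ⁷, Y₅₁ = i, Y₆₄ = ξ, Y₇₃ = ξ³, Y₈₂ = −1). Then the subgroup of GL(8,ℂ) generated by X and Y is a finite group of 2-power order. -/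
open Complex

set_option maxRecDepth 10000

namespace BingAux

open Matrix

def E : List (Fin 8 → Fin 8) :=
  [ ![0,1,2,3,4,5,6,7], ![1,2,3,0,5,6,7,4], ![2,3,0,1,6,7,4,5], ![3,0,1,2,7,4,5,6],
    ![4,7,6,5,0,3,2,1], ![5,4,7,6,1,0,3,2], ![6,5,4,7,2,1,0,3], ![7,6,5,4,3,2,1,0] ]

lemma E_id : (![0,1,2,3,4,5,6,7] : Fin 8 → Fin 8) ∈ E := by decide

lemma E_mul : ∀ σ ∈ E, ∀ τ ∈ E, (fun j => σ (τ j)) ∈ E := by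
  intro σ hσ τ hτ
  fin_cases hσ <;> fin_cases hτ <;> decide

lemma E_pow4 : ∀ σ ∈ E, ∀ j, σ (σ (σ (σ j))) = j := by
  intro σ hσ
  fin_cases hσ <;> decide

lemma E_inv : ∀ σ ∈ E, ∃ τ ∈ E, (∀ j, σ (τ j) = j) ∧ (∀ j, τ (σ j) = j) := by
  intro σ hσ
  refine ⟨fun j => σ (σ (σ j)), E_mul σ hσ _ (E_mul σ hσ σ hσ),
    fun j => E_pow4 σ hσ j, fun j => ?_⟩
  show σ (σ (σ (σ j))) = j
  exact E_pow4 σ hσ j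

abbrev GL8 := Matrix.GeneralLinearGroup (Fin 8) ℂ

/-- Monomial matrix with permutation in `E` and 8th-root entries. -/
def P (g : GL8) : Prop :=
  ∃ σ ∈ E, ∃ a : Fin 8 → ℂ, (∀ j, a j ^ 8 = 1) ∧
    ∀ i j, (g : Matrix (Fin 8) (Fin 8) ℂ) i j = if i = σ j then a j else 0

lemma mul_mono {M N : Matrix (Fin 8) (Fin 8) ℂ} {σ τ : Fin 8 → Fin 8} {a b : Fin 8 → ℂ}
    (hM : ∀ i j, M i j = if i = σ j then a j else 0)
    (hN : ∀ i j, N i j = if i = τ j then b j else 0) :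
    ∀ i j, (M * N) i j = if i = σ (τ j) then a (τ j) * b j else 0 := by
  intro i j
  rw [Matrix.mul_apply, Finset.sum_eq_single (τ j)]
  · rw [hM, hN]; simp
  · intro k _ hk
    rw [hN]; simp [hk]
  · simp

lemma P_one : P 1 := by
  refine ⟨![0,1,2,3,4,5,6,7], E_id, fun _ => 1, fun j => one_pow 8, fun i j => ?_⟩
  have : (![0,1,2,3,4,5,6,7] : Fin 8 → Fin 8) j = j := by fin_cases j <;> rfl
  rw [this]
  simp [Matrix.one_apply]

lemma P_mul {g h : GL8} (hg : P g) (hh : P h) : P (g * h) := by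
  obtain ⟨σ, hσ, a, ha, hga⟩ := hg
  obtain ⟨τ, hτ, b, hb, hhb⟩ := hh
  refine ⟨fun j => σ (τ j), E_mul σ hσ τ hτ, fun j => a (τ j) * b j,
    fun j => by rw [mul_pow, ha, hb, one_mul], fun i j => ?_⟩
  have := mul_mono hga hhb i j
  simpa using this

lemma P_inv {g : GL8} (hg : P g) : P g⁻¹ := by
  obtain ⟨σ, hσ, a, ha, hga⟩ := hg
  obtain ⟨τ, hτ, hστ, hτσ⟩ := E_inv σ hσ
  have hanz : ∀ j, a j ≠ 0 := by
    intro j h0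
    have := ha j
    rw [h0] at this
    simp at this
  set N : Matrix (Fin 8) (Fin 8) ℂ := Matrix.of fun i j => if i = τ j then (a (τ j))⁻¹ else 0
    with hNdef
  have hN : ∀ i j, N i j = if i = τ j then (a (τ j))⁻¹ else 0 := fun i j => rfl
  have hMN : (g : Matrix (Fin 8) (Fin 8) ℂ) * N = 1 := by
    ext i j
    rw [mul_mono hga hN i j, hστ j]
    rw [Matrix.one_apply]
    by_cases h : i = j <;> simp [h, mul_inv_cancel₀ (hanz (τ j))]
  have hinv : ((g⁻¹ : GL8) : Matrix (Fin 8) (Fin 8) ℂ) = N := by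
    calc ((g⁻¹ : GL8) : Matrix (Fin 8) (Fin 8) ℂ)
        = ((g⁻¹ : GL8) : Matrix (Fin 8) (Fin 8) ℂ) * ((g : Matrix (Fin 8) (Fin 8) ℂ) * N) := by
          rw [hMN, mul_one]
      _ = (((g⁻¹ * g : GL8)) : Matrix (Fin 8) (Fin 8) ℂ) * N := by
          rw [Units.val_mul, mul_assoc]
      _ = N := by rw [inv_mul_cancel]; simp
  refine ⟨τ, hτ, fun j => (a (τ j))⁻¹, fun j => ?_, fun i j => by rw [hinv]; exact hN i j⟩
  rw [inv_pow, ha (τ j), inv_one]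

lemma P_pow32 {g : GL8} (hg : P g) : g ^ 32 = 1 := by
  obtain ⟨σ, hσ, a, ha, hga⟩ := hg
  set M : Matrix (Fin 8) (Fin 8) ℂ := (g : Matrix (Fin 8) (Fin 8) ℂ) with hM
  have h2 := mul_mono hga hga
  have h4 := mul_mono h2 h2
  have hM4 : M ^ 4 =
      Matrix.diagonal (fun j => (a (σ (σ (σ j))) * a (σ (σ j))) * (a (σ j) * a j)) := by
    have e : M ^ 4 = (M * M) * (M * M) := by
      rw [show (4:ℕ) = 2 * 2 from rfl, pow_mul, sq, sq]
    ext i j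
    rw [e, h4 i j, E_pow4 σ hσ j, Matrix.diagonal_apply]
    split_ifs with h
    · subst h; rfl
    · rfl
  have hM32 : M ^ 32 = 1 := by
    have e32 : M ^ 32 = (M ^ 4) ^ 8 := by rw [← pow_mul]
    rw [e32, hM4, Matrix.diagonal_pow]
    have : (fun j => (a (σ (σ (σ j))) * a (σ (σ j))) * (a (σ j) * a j)) ^ 8
        = (1 : Fin 8 → ℂ) := by
      funext j
      simp only [Pi.pow_apply, Pi.one_apply, mul_pow, ha]
      ring
    rw [this]
    exact Matrix.diagonal_one
  apply Units.ext
  rw [Units.val_pow_eq_pow_val, Units.val_one]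
  exact hM32

lemma finite_P : {g : GL8 | P g}.Finite := by
  have hR : {x : ℂ | x ^ 8 = 1}.Finite := by
    refine Set.Finite.subset (Polynomial.nthRoots 8 (1 : ℂ)).toFinset.finite_toSet ?_
    intro x hx
    rw [Finset.mem_coe, Multiset.mem_toFinset, Polynomial.mem_nthRoots (by norm_num : 0 < 8)]
    exact hx
  have hT : {M : Matrix (Fin 8) (Fin 8) ℂ |
      ∀ i j, M i j ∈ insert (0 : ℂ) {x : ℂ | x ^ 8 = 1}}.Finite := by
    refine Set.Finite.subset
      (Set.Finite.pi (fun _ : Fin 8 => Set.Finite.pi (fun _ : Fin 8 => hR.insert 0))) ?_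
    intro M hM
    intro i _ j _
    exact hM i j
  refine Set.Finite.of_finite_image (f := fun g : GL8 => (g : Matrix (Fin 8) (Fin 8) ℂ)) ?_ ?_
  · refine hT.subset ?_
    rintro _ ⟨g, hg, rfl⟩
    obtain ⟨σ, hσ, a, ha, hga⟩ := hg
    intro i j
    show (g : Matrix (Fin 8) (Fin 8) ℂ) i j ∈ _
    rw [hga i j]
    split_ifs with h
    · exact Set.mem_insert_of_mem _ (ha j)
    · exact Set.mem_insert _ _
  · intro g _ h _ hgh
    exact Units.ext hgh

end BingAux

open BingAux

/-- The subgroup of `GL(8,ℂ)` generated by the explicit matrices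
`X, Y` of the Bing double computation is a finite group of 2-power order. -/
theorem bing_double_representation_two_group :
    let ξ : ℂ := Complex.exp (2 * Real.pi * Complex.I / 8)
    let i : ℂ := ξ ^ 2
    let X : Matrix (Fin 8) (Fin 8) ℂ :=
      !![0, 0, 0, ξ, 0, 0, 0, 0;
         1, 0, 0, 0, 0, 0, 0, 0;
         0, 1, 0, 0, 0, 0, 0, 0;
         0, 0, -i, 0, 0, 0, 0, 0;
         0, 0, 0, 0, 0, 0, 0, ξ;
         0, 0, 0, 0, -1, 0, 0, 0;
         0, 0, 0, 0, 0, 1, 0, 0;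
         0, 0, 0, 0, 0, 0, -ξ, 0]
    let Y : Matrix (Fin 8) (Fin 8) ℂ :=
      !![0, 0, 0, 0, ξ, 0, 0, 0;
         0, 0, 0, 0, 0, 0, 0, -i;
         0, 0, 0, 0, 0, 0, ξ ^ 3, 0;
         0, 0, 0, 0, 0, ξ ^ 7, 0, 0;
         i, 0, 0, 0, 0, 0, 0, 0;
         0, 0, 0, ξ, 0, 0, 0, 0;
         0, 0, ξ ^ 3, 0, 0, 0, 0, 0;
         0, -1, 0, 0, 0, 0, 0, 0]
    ∀ X' Y' : Matrix.GeneralLinearGroup (Fin 8) ℂ,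
      (X' : Matrix (Fin 8) (Fin 8) ℂ) = X →
      (Y' : Matrix (Fin 8) (Fin 8) ℂ) = Y →
      ∃ n : ℕ, Nat.card (Subgroup.closure ({X', Y'} :
        Set (Matrix.GeneralLinearGroup (Fin 8) ℂ))) = 2 ^ n := by

  intro ξ i X Y X' Y' hX hY
  have hξ8 : ξ ^ 8 = 1 := by
    show Complex.exp (2 * Real.pi * Complex.I / 8) ^ 8 = 1
    rw [← Complex.exp_nat_mul,
      show (8 : ℕ) * (2 * (Real.pi : ℂ) * Complex.I / 8) = 2 * Real.pi * Complex.I by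
        push_cast; ring]
    exact Complex.exp_two_pi_mul_I
  clear_value ξ
  have hPX : P X' := by
    refine ⟨![1,2,3,0,5,6,7,4], by decide,
      ![1, 1, -(ξ ^ 2), ξ, -1, 1, -ξ, ξ], ?_, ?_⟩
    · intro j
      fin_cases j <;> simp only [Fin.reduceFinMk, Matrix.cons_val] <;>
        first
          | with_reducible exact hξ8
          | (show (-ξ) ^ 8 = 1; linear_combination hξ8)
          | (show (-(ξ ^ 2)) ^ 8 = 1; linear_combination (ξ ^ 8 + 1) * hξ8)
          | (show (ξ ^ 2) ^ 8 = 1; linear_combination (ξ ^ 8 + 1) * hξ8)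
          | (show (ξ ^ 3) ^ 8 = 1; linear_combination (ξ ^ 16 + ξ ^ 8 + 1) * hξ8)
          | (show (ξ ^ 7) ^ 8 = 1;
              linear_combination (ξ ^ 48 + ξ ^ 40 + ξ ^ 32 + ξ ^ 24 + ξ ^ 16 + ξ ^ 8 + 1) * hξ8)
          | (show ((1 : ℂ)) ^ 8 = 1; norm_num)
          | (show ((-1 : ℂ)) ^ 8 = 1; norm_num)
    · intro a b
      rw [hX]
      simp only [X, i]
      fin_cases a <;> fin_cases b <;> first | rfl | simp | (simp; rfl)
  have hPY : P Y' := by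
    refine ⟨![4,7,6,5,0,3,2,1], by decide,
      ![ξ ^ 2, -1, ξ ^ 3, ξ, ξ, ξ ^ 7, ξ ^ 3, -(ξ ^ 2)], ?_, ?_⟩
    · intro j
      fin_cases j <;> simp only [Fin.reduceFinMk, Matrix.cons_val] <;>
        first
          | with_reducible exact hξ8
          | ((with_reducible show (-ξ) ^ 8 = 1); linear_combination hξ8)
          | ((with_reducible show (-(ξ ^ 2)) ^ 8 = 1); linear_combination (ξ ^ 8 + 1) * hξ8)
          | ((with_reducible show (ξ ^ 2) ^ 8 = 1); linear_combination (ξ ^ 8 + 1) * hξ8)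
          | ((with_reducible show (ξ ^ 3) ^ 8 = 1); linear_combination (ξ ^ 16 + ξ ^ 8 + 1) * hξ8)
          | ((with_reducible show (ξ ^ 7) ^ 8 = 1);
              linear_combination (ξ ^ 48 + ξ ^ 40 + ξ ^ 32 + ξ ^ 24 + ξ ^ 16 + ξ ^ 8 + 1) * hξ8)
          | ((with_reducible show ((1 : ℂ)) ^ 8 = 1); norm_num)
          | ((with_reducible show ((-1 : ℂ)) ^ 8 = 1); norm_num)
          | linear_combination (ξ ^ 48 + ξ ^ 40 + ξ ^ 32 + ξ ^ 24 + ξ ^ 16 + ξ ^ 8 + 1) * hξ8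
    · intro a b
      rw [hY]
      simp only [Y, i]
      fin_cases a <;> fin_cases b <;> first | rfl | simp | (simp; rfl)
  have hHP : ∀ g ∈ Subgroup.closure ({X', Y'} : Set GL8), P g := by
    intro g hg
    refine Subgroup.closure_induction ?_ P_one ?_ ?_ hg
    · rintro x (rfl | rfl)
      · exact hPX
      · exact hPY
    · exact fun x y _ _ hx hy => P_mul hx hy
    · exact fun x _ hx => P_inv hx
  have hfin : ((Subgroup.closure ({X', Y'} : Set GL8) : Subgroup GL8) : Set GL8).Finite :=
    finite_P.subset fun g hg => hHP g hg
  haveI : Finite (Subgroup.closure ({X', Y'} : Set GL8)) := hfin.to_subtype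
  have hp : IsPGroup 2 (Subgroup.closure ({X', Y'} : Set GL8)) := by
    intro g
    refine ⟨5, Subtype.ext ?_⟩
    rw [SubmonoidClass.coe_pow, OneMemClass.coe_one]
    show (g : GL8) ^ 32 = 1
    exact P_pow32 (hHP g g.2)
  exact IsPGroup.iff_card.mp hp
end

section
/- Let p be a prime, let P(k) ⊆ GL(k,ℂ) denote the group of k×k permutation matrices and D(k) ⊆ GL(k,ℂ) the group of diagonal matrices. Suppose X₁, …, Xₙ ∈ GL(k,ℂ) can each be written Xᵢ = Pᵢ Dᵢ with Pᵢ ∈ P(k) and Dᵢ diagonal with all diagonal entries p-power roots of unity, such that the subgroup generated by P₁, …, Pₙ is finite of p-power order. Then the subgroup of GL(k,ℂ) generated by X₁, …, Xₙ is a finite p-group. -/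
open Matrix Equiv Finset

private lemma permM_mul {k : ℕ} (σ τ : Equiv.Perm (Fin k)) :
    (σ.permMatrix ℂ) * (τ.permMatrix ℂ) = ((τ * σ).permMatrix ℂ) := by
  simp only [Equiv.Perm.permMatrix]
  rw [← PEquiv.toMatrix_trans, ← Equiv.toPEquiv_trans]
  rfl

private lemma permM_one {k : ℕ} : ((1 : Equiv.Perm (Fin k)).permMatrix ℂ) = 1 := by
  simp only [Equiv.Perm.permMatrix]
  rw [show (1 : Equiv.Perm (Fin k)) = Equiv.refl (Fin k) from rfl,
    Equiv.toPEquiv_refl, PEquiv.toMatrix_refl]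

private lemma diag_mul_permM {k : ℕ} (σ : Equiv.Perm (Fin k)) (e : Fin k → ℂ) :
    Matrix.diagonal e * σ.permMatrix ℂ
      = σ.permMatrix ℂ * Matrix.diagonal (fun j => e (σ⁻¹ j)) := by
  ext i j
  rw [Equiv.Perm.permMatrix, PEquiv.mul_toMatrix_toPEquiv, PEquiv.toMatrix_toPEquiv_mul]
  simp only [Matrix.submatrix_apply, Matrix.diagonal_apply, id_eq]
  by_cases h : σ i = j
  · subst h
    simp
  · have h' : ¬ i = σ.symm j := fun hc => h (by simp [hc])
    simp [h, h']

private lemma monomial_mul {k : ℕ} (σ σ' : Equiv.Perm (Fin k)) (d d' : Fin k → ℂ) :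
    (σ.permMatrix ℂ * Matrix.diagonal d) * (σ'.permMatrix ℂ * Matrix.diagonal d')
      = (σ' * σ).permMatrix ℂ * Matrix.diagonal (fun j => d (σ'⁻¹ j) * d' j) := by
  rw [mul_assoc, ← mul_assoc (Matrix.diagonal d), diag_mul_permM, mul_assoc,
    Matrix.diagonal_mul_diagonal, ← mul_assoc, permM_mul]

private lemma monomial_pow {k : ℕ} (σ : Equiv.Perm (Fin k)) (d : Fin k → ℂ) (m : ℕ) :
    (σ.permMatrix ℂ * Matrix.diagonal d) ^ m
      = (σ.permMatrix ℂ) ^ m *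
        Matrix.diagonal (fun j => ∏ t ∈ Finset.range m, d ((σ⁻¹ ^ t) j)) := by
  induction m with
  | zero => simp
  | succ m ih =>
      rw [pow_succ, ih, mul_assoc, ← mul_assoc (Matrix.diagonal _), diag_mul_permM,
        mul_assoc, Matrix.diagonal_mul_diagonal, ← mul_assoc, ← pow_succ]
      congr 1
      funext j i
      rcases eq_or_ne j i with rfl | hji
      · simp only [Matrix.diagonal_apply_eq, Finset.prod_range_succ', Pi.mul_apply]
        simp [pow_succ, Equiv.Perm.mul_apply]
      · simp [Matrix.diagonal_apply_ne _ hji]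

/-- If `X₁, …, Xₙ ∈ GL(k,ℂ)` can each be written `Xᵢ = Pᵢ Dᵢ` with
`Pᵢ` a permutation matrix and `Dᵢ` diagonal with `p`-power root of unity entries,
and the subgroup generated by the `Pᵢ` is finite of `p`-power order, then the
subgroup generated by the `Xᵢ` is a finite `p`-group. -/
theorem perm_diag_generates_p_group (p : ℕ) (hp : p.Prime) (k n : ℕ)
    (X P D : Fin n → Matrix.GeneralLinearGroup (Fin k) ℂ)
    (hXPD : ∀ i, X i = P i * D i)
    (hP : ∀ i, ∃ σ : Equiv.Perm (Fin k),
      ((P i : Matrix.GeneralLinearGroup (Fin k) ℂ) : Matrix (Fin k) (Fin k) ℂ)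
        = σ.permMatrix ℂ)
    (hD : ∀ i, ∃ d : Fin k → ℂ,
      ((D i : Matrix.GeneralLinearGroup (Fin k) ℂ) : Matrix (Fin k) (Fin k) ℂ)
          = Matrix.diagonal d ∧ ∀ j, ∃ s : ℕ, d j ^ p ^ s = 1)
    (hPgrp : ∃ s : ℕ, Nat.card (Subgroup.closure (Set.range P)) = p ^ s) :
    ∃ s : ℕ, Nat.card (Subgroup.closure (Set.range X)) = p ^ s := by
  classical
  choose σs hσs using hP
  choose ds hdeq hroot using hD
  choose ss hss using fun i j => hroot i j
  -- a uniform exponent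
  set S : ℕ := (Finset.univ : Finset (Fin n × Fin k)).sup (fun ij => ss ij.1 ij.2) with hSdef
  have hS : ∀ i j, ds i j ^ p ^ S = 1 := by
    intro i j
    have hle : ss i j ≤ S := Finset.le_sup (f := fun ij : Fin n × Fin k => ss ij.1 ij.2)
      (Finset.mem_univ (i, j))
    calc ds i j ^ p ^ S = (ds i j ^ p ^ ss i j) ^ p ^ (S - ss i j) := by
          rw [← pow_mul, ← pow_add, Nat.add_sub_cancel' hle]
      _ = 1 := by rw [hss, one_pow]
  have hpS : (0:ℕ) < p ^ S := pow_pos hp.pos S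
  have hne : ∀ x : ℂ, x ^ p ^ S = 1 → x ≠ 0 := by
    intro x hx h0
    rw [h0, zero_pow hpS.ne'] at hx
    exact zero_ne_one hx
  set SP := Subgroup.closure (Set.range P) with hSPdef
  -- the ambient monomial subgroup
  set M : Subgroup (Matrix.GeneralLinearGroup (Fin k) ℂ) :=
    { carrier := {g | ∃ σ : Equiv.Perm (Fin k), ∃ d : Fin k → ℂ,
        (∀ j, d j ^ p ^ S = 1) ∧
        (∃ Q ∈ SP, (Q : Matrix (Fin k) (Fin k) ℂ) = σ.permMatrix ℂ) ∧
        (g : Matrix (Fin k) (Fin k) ℂ) = σ.permMatrix ℂ * Matrix.diagonal d}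
      one_mem' := by
        refine ⟨1, fun _ => 1, by simp, ⟨1, one_mem SP, by simp [permM_one]⟩, ?_⟩
        simp [permM_one]
      mul_mem' := by
        rintro a b ⟨σ, d, hd, ⟨Q, hQ, hQe⟩, ha⟩ ⟨σ', d', hd', ⟨Q', hQ', hQ'e⟩, hb⟩
        refine ⟨σ' * σ, fun j => d (σ'⁻¹ j) * d' j, ?_, ⟨Q * Q', mul_mem hQ hQ', ?_⟩, ?_⟩
        · intro j; rw [mul_pow, hd, hd', one_mul]
        · rw [Units.val_mul, hQe, hQ'e, permM_mul]
        · rw [Units.val_mul, ha, hb, monomial_mul]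
      inv_mem' := by
        rintro a ⟨σ, d, hd, ⟨Q, hQ, hQe⟩, ha⟩
        have hABgen : ∀ (τ : Equiv.Perm (Fin k)) (e : Fin k → ℂ), (∀ j, e j ≠ 0) →
            (τ.permMatrix ℂ * Matrix.diagonal e) *
              (τ⁻¹.permMatrix ℂ * Matrix.diagonal (fun j => (e (τ j))⁻¹)) = 1 := by
          intro τ e he
          rw [monomial_mul, inv_mul_cancel, permM_one, one_mul]
          have : (fun j => e (τ⁻¹⁻¹ j) * (e (τ j))⁻¹) = fun _ => (1:ℂ) := by
            funext j
            simp [inv_inv, mul_inv_cancel₀ (he (τ j))]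
          rw [this, Matrix.diagonal_one]
        have hdne : ∀ j, d j ≠ 0 := fun j => hne _ (hd j)
        have hAB : (σ.permMatrix ℂ * Matrix.diagonal d) *
            (σ⁻¹.permMatrix ℂ * Matrix.diagonal (fun j => (d (σ j))⁻¹)) = 1 :=
          hABgen σ d hdne
        have hBA : (σ⁻¹.permMatrix ℂ * Matrix.diagonal (fun j => (d (σ j))⁻¹)) *
            (σ.permMatrix ℂ * Matrix.diagonal d) = 1 := by
          have := hABgen σ⁻¹ (fun j => (d (σ j))⁻¹) (fun j => inv_ne_zero (hdne (σ j)))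
          rw [inv_inv] at this
          have hfun : (fun j => ((fun j => (d (σ j))⁻¹) (σ⁻¹ j))⁻¹) = d := by
            funext j
            simp [Equiv.Perm.coe_inv]
          rw [hfun] at this
          exact this
        refine ⟨σ⁻¹, fun j => (d (σ j))⁻¹, ?_, ⟨Q⁻¹, inv_mem hQ, ?_⟩, ?_⟩
        · intro j; rw [inv_pow, hd, inv_one]
        · refine Units.inv_eq_of_mul_eq_one_right ?_
          rw [hQe, permM_mul, inv_mul_cancel, permM_one]
        · refine Units.inv_eq_of_mul_eq_one_right ?_
          rw [ha]
          exact hAB } with hMdef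
  have hXmem : ∀ i, X i ∈ M := by
    intro i
    refine ⟨σs i, ds i, hS i, ⟨P i, Subgroup.subset_closure ⟨i, rfl⟩, hσs i⟩, ?_⟩
    rw [hXPD i, Units.val_mul, hσs i, hdeq i]
  have hle : Subgroup.closure (Set.range X) ≤ M :=
    (Subgroup.closure_le M).mpr (by rintro _ ⟨i, rfl⟩; exact hXmem i)
  -- finiteness
  have hRfin : {x : ℂ | x ^ p ^ S = 1}.Finite := by
    have : {x : ℂ | x ^ p ^ S = 1} = ↑(Polynomial.nthRootsFinset (p ^ S) (1 : ℂ)) := by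
      ext x; simp [Polynomial.mem_nthRootsFinset hpS]
    rw [this]
    exact (Polynomial.nthRootsFinset (p ^ S) (1 : ℂ)).finite_toSet
  have hDfin : {d : Fin k → ℂ | ∀ j, d j ^ p ^ S = 1}.Finite := by
    refine (Set.Finite.pi (fun _ : Fin k => hRfin)).subset ?_
    intro d hd j _
    exact hd j
  have hMfin : (M : Set (Matrix.GeneralLinearGroup (Fin k) ℂ)).Finite := by
    refine Set.Finite.of_finite_image (f := fun g => (g : Matrix (Fin k) (Fin k) ℂ)) ?_
      (fun a _ b _ h => Units.ext h)
    refine Set.Finite.subset (((Set.finite_univ.prod hDfin).image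
      (fun q : Equiv.Perm (Fin k) × (Fin k → ℂ) =>
        q.1.permMatrix ℂ * Matrix.diagonal q.2))) ?_
    rintro _ ⟨g, ⟨σ, d, hd, -, hge⟩, rfl⟩
    exact ⟨(σ, d), ⟨trivial, hd⟩, hge.symm⟩
  haveI hMfinite : Finite M := hMfin.to_subtype
  haveI : Finite (Subgroup.closure (Set.range X)) :=
    Finite.of_injective _ (Subgroup.inclusion_injective hle)
  -- p-group
  obtain ⟨s0, hs0⟩ := hPgrp
  haveI : Finite SP := Nat.finite_of_card_ne_zero (by rw [hSPdef] at hs0 ⊢; rw [hs0]; exact (pow_pos hp.pos s0).ne')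
  have hpg : IsPGroup p (Subgroup.closure (Set.range X)) := by
    intro h
    obtain ⟨σ, d, hd, ⟨Q, hQ, hQe⟩, hge⟩ := hle h.2
    refine ⟨s0 + S, ?_⟩
    have hQm : (Q : Matrix.GeneralLinearGroup (Fin k) ℂ) ^ p ^ s0 = 1 := by
      have h1 : (⟨Q, hQ⟩ : SP) ^ Nat.card SP = 1 := pow_card_eq_one'
      rw [hSPdef] at hs0
      rw [hs0] at h1
      have := congrArg (Subtype.val) h1
      simpa using this
    have hcm : (σ.permMatrix ℂ) ^ p ^ s0 = 1 := by
      rw [← hQe, ← Units.val_pow_eq_pow_val, hQm, Units.val_one]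
    have key : (((h : Matrix.GeneralLinearGroup (Fin k) ℂ)
        : Matrix (Fin k) (Fin k) ℂ)) ^ (p ^ s0 * p ^ S) = 1 := by
      rw [hge, pow_mul, monomial_pow, hcm, one_mul, Matrix.diagonal_pow]
      have : (fun j => ∏ t ∈ Finset.range (p ^ s0), d ((σ⁻¹ ^ t) j)) ^ (p ^ S)
          = fun _ => (1:ℂ) := by
        funext j
        rw [Pi.pow_apply, ← Finset.prod_pow]
        exact Finset.prod_eq_one fun t _ => hd _
      rw [this, Matrix.diagonal_one]
    have hval : ((h ^ p ^ (s0 + S) :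
        Subgroup.closure (Set.range X)) : Matrix.GeneralLinearGroup (Fin k) ℂ) = 1 := by
      rw [SubmonoidClass.coe_pow]
      apply Units.ext
      rw [Units.val_pow_eq_pow_val, Units.val_one, pow_add]
      exact key
    exact Subtype.ext hval
  haveI : Fact p.Prime := ⟨hp⟩
  exact IsPGroup.iff_card.mp hpg
end

section
/- Let K be a knot with Seifert matrix B (a 2g×2g integer matrix with det(B − Bᵗ) = 1) and Alexander polynomial Δ_K(t) = det(Bᵗ − tB). Suppose B is metabolic, i.e., there is an invertible integer matrix P such that PBPᵗ has a g×g block of zeros in the upper-left corner. Then Δ_K(t) = ± t^g · f(t) · f(t⁻¹) for some integer Laurent polynomial f, where f(t) = det of the upper-right g×g block of P(Bᵗ − tB)Pᵗ up to units. -/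
open LaurentPolynomial Polynomial

lemma laurentInvert_T (n : ℤ) : laurentInvert (T n) = T (-n) := by
  rw [laurentInvert, LaurentPolynomial.T, LaurentPolynomial.T,
    AddMonoidAlgebra.domCongr_single]
  rfl

noncomputable def sigL : LaurentPolynomial ℤ →+* LaurentPolynomial ℤ :=
  laurentInvert.toAlgHom.toRingHom

lemma sigL_apply (x : LaurentPolynomial ℤ) : sigL x = laurentInvert x := rfl

lemma sigL_C (r : ℤ) : sigL (LaurentPolynomial.C r) = LaurentPolynomial.C r := by
  rw [eq_intCast (LaurentPolynomial.C (R := ℤ)) r, map_intCast]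

lemma sigL_T (n : ℤ) : sigL (T n) = T (-n) := laurentInvert_T n

section main
variable (g : ℕ) (B P : Matrix (Fin g ⊕ Fin g) (Fin g ⊕ Fin g) ℤ)

abbrev LL := LaurentPolynomial ℤ

noncomputable def BL : Matrix (Fin g ⊕ Fin g) (Fin g ⊕ Fin g) LL := B.map LaurentPolynomial.C
noncomputable def AL : Matrix (Fin g ⊕ Fin g) (Fin g ⊕ Fin g) LL :=
  BL g B.transpose - (T 1 : LL) • BL g B
noncomputable def NL : Matrix (Fin g ⊕ Fin g) (Fin g ⊕ Fin g) LL :=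
  BL g P * AL g B * (BL g P).transpose

lemma hmap : ((B.transpose.map Polynomial.C) - (X : Polynomial ℤ) • (B.map Polynomial.C)).map
    Polynomial.toLaurent = AL g B := by
  ext i j
  simp [AL, BL, Matrix.map_apply, Matrix.sub_apply, Matrix.smul_apply, smul_eq_mul,
    map_sub, map_mul, Polynomial.toLaurent_C, Polynomial.toLaurent_X]

lemma hPmap : (P.map Polynomial.C).map Polynomial.toLaurent = BL g P := by
  ext i j; simp [BL, Polynomial.toLaurent_C]

lemma hMN :
    ((P.map Polynomial.C) *
      ((B.transpose.map Polynomial.C) - (X : Polynomial ℤ) • (B.map Polynomial.C)) *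
      (P.map Polynomial.C).transpose).map Polynomial.toLaurent = NL g B P := by
  rw [Matrix.map_mul, Matrix.map_mul, hmap, hPmap, Matrix.transpose_map, hPmap]
  rfl
end main

section main2
variable (g : ℕ) (B P : Matrix (Fin g ⊕ Fin g) (Fin g ⊕ Fin g) ℤ)

lemma hsplit : NL g B P = (P * B.transpose * P.transpose).map LaurentPolynomial.C
    - (T 1 : LL) • ((P * B * P.transpose).map LaurentPolynomial.C) := by
  rw [NL, AL, Matrix.mul_sub, Matrix.sub_mul, Matrix.mul_smul, Matrix.smul_mul]
  rw [BL, BL, BL, ← Matrix.transpose_map, ← Matrix.map_mul, ← Matrix.map_mul,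
    ← Matrix.map_mul, ← Matrix.map_mul]

lemma h11 (hmeta : (P * B * P.transpose).toBlocks₁₁ = 0) :
    (NL g B P).toBlocks₁₁ = 0 := by
  have hm : ∀ i j, (P * B * P.transpose) (Sum.inl i) (Sum.inl j) = 0 := by
    intro i j
    have := congrFun (congrFun hmeta i) j
    simpa [Matrix.toBlocks₁₁] using this
  have hT : P * B.transpose * P.transpose = (P * B * P.transpose).transpose := by
    rw [Matrix.transpose_mul, Matrix.transpose_mul, Matrix.transpose_transpose,
      Matrix.mul_assoc]
  rw [hsplit, hT]
  ext i j
  simp only [Matrix.toBlocks₁₁, Matrix.of_apply, Matrix.sub_apply, Matrix.smul_apply,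
    Matrix.map_apply, Matrix.transpose_apply, smul_eq_mul, hm, Matrix.zero_apply, map_zero,
    mul_zero, sub_zero]
end main2

section main3
variable (g : ℕ) (B P : Matrix (Fin g ⊕ Fin g) (Fin g ⊕ Fin g) ℤ)

lemma hT1 : (T 1 : LL) * T (-1) = 1 := by
  rw [← T_add]; norm_num [T_zero]

lemma hALt : (AL g B).transpose = BL g B - (T 1 : LL) • BL g B.transpose := by
  rw [AL, Matrix.transpose_sub, Matrix.transpose_smul]
  unfold BL
  rw [← Matrix.transpose_map, ← Matrix.transpose_map, Matrix.transpose_transpose]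

lemma hALsig : (AL g B).map sigL = BL g B.transpose - (T (-1) : LL) • BL g B := by
  ext i j
  simp [AL, BL, Matrix.map_apply, Matrix.sub_apply, Matrix.smul_apply, smul_eq_mul,
    map_sub, map_mul, sigL_C, sigL_T]

lemma hPsig : (BL g P).map sigL = BL g P := by
  ext i j; simp [BL, Matrix.map_apply, sigL_C]

lemma hinner : (-(T 1 : LL)) • (BL g B.transpose - (T (-1) : LL) • BL g B)
    = BL g B - (T 1 : LL) • BL g B.transpose := by
  refine Matrix.ext fun i j => ?_
  simp only [Matrix.sub_apply, Matrix.smul_apply, smul_eq_mul]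
  calc -(T 1 : LL) * (BL g B.transpose i j - T (-1) * BL g B i j)
      = (T 1 * T (-1)) * BL g B i j - T 1 * BL g B.transpose i j := by ring
    _ = _ := by rw [hT1, one_mul]

lemma htrans : (NL g B P).transpose = (-(T 1 : LL)) • ((NL g B P).map sigL) := by
  have h1 : (NL g B P).transpose = BL g P * (AL g B).transpose * (BL g P).transpose := by
    rw [NL, Matrix.transpose_mul, Matrix.transpose_mul, Matrix.transpose_transpose,
      Matrix.mul_assoc]
  have h2 : (NL g B P).map sigL = BL g P * ((AL g B).map sigL) * (BL g P).transpose := by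
    rw [NL, Matrix.map_mul, Matrix.map_mul, hPsig, Matrix.transpose_map, hPsig]
  rw [h1, h2, hALt, hALsig, ← hinner, Matrix.mul_smul, Matrix.smul_mul]
end main3

section main4
variable (g : ℕ) (B P : Matrix (Fin g ⊕ Fin g) (Fin g ⊕ Fin g) ℤ)

lemma h21det : ((NL g B P).toBlocks₂₁).det
    = (-1 : LL) ^ g * T (g : ℤ) * sigL (((NL g B P).toBlocks₁₂).det) := by
  have hc : (NL g B P).toBlocks₂₁ = ((NL g B P).transpose.toBlocks₁₂).transpose := by
    refine Matrix.ext fun i j => ?_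
    rfl
  have hb : ((-(T 1 : LL)) • ((NL g B P).map sigL)).toBlocks₁₂
      = (-(T 1 : LL)) • (((NL g B P).toBlocks₁₂).map sigL) := by
    refine Matrix.ext fun i j => ?_
    rfl
  rw [hc, Matrix.det_transpose, htrans, hb, Matrix.det_smul, ← RingHom.mapMatrix_apply, ← RingHom.map_det,
    Fintype.card_fin, neg_pow, T_pow, mul_one, mul_assoc]

end main4

section main5
variable (g : ℕ) (B P : Matrix (Fin g ⊕ Fin g) (Fin g ⊕ Fin g) ℤ)

lemma hdetN (hP : IsUnit P.det) : (NL g B P).det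
    = Polynomial.toLaurent (((B.transpose.map Polynomial.C)
        - (X : Polynomial ℤ) • (B.map Polynomial.C)).det) := by
  have hP2 : P.det * P.det = 1 := by
    rcases Int.isUnit_iff.mp hP with h | h <;> rw [h] <;> norm_num
  have hPl : (BL g P).det = LaurentPolynomial.C P.det := by
    rw [BL, ← RingHom.mapMatrix_apply, ← RingHom.map_det]
  have hALdet : (AL g B).det = Polynomial.toLaurent (((B.transpose.map Polynomial.C)
      - (X : Polynomial ℤ) • (B.map Polynomial.C)).det) := by
    rw [← hmap, ← RingHom.mapMatrix_apply, ← RingHom.map_det]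
  rw [NL, Matrix.det_mul, Matrix.det_mul, Matrix.det_transpose, hPl, hALdet,
    mul_right_comm, ← map_mul, hP2, map_one, one_mul]

end main5


/-- If a Seifert matrix `B` (a `2g×2g` integer matrix with
`det(B − Bᵗ) = 1`) is metabolic, i.e. congruent over `ℤ` to a matrix with
vanishing upper-left `g×g` block, then the Alexander polynomial
`Δ(t) = det(Bᵗ − tB)` satisfies the Fox–Milnor factorization
`Δ(t) = ± t^g · f(t) · f(t⁻¹)`, where `f` is, up to units, the determinant of the
upper-right `g×g` block of `P(Bᵗ − tB)Pᵗ`. -/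
theorem fox_milnor_of_metabolic (g : ℕ)
    (B : Matrix (Fin g ⊕ Fin g) (Fin g ⊕ Fin g) ℤ)
    (hB : (B - B.transpose).det = 1)
    (P : Matrix (Fin g ⊕ Fin g) (Fin g ⊕ Fin g) ℤ)
    (hP : IsUnit P.det)
    (hmeta : (P * B * P.transpose).toBlocks₁₁ = 0) :
    let Δ : Polynomial ℤ :=
      ((B.transpose.map Polynomial.C) - (Polynomial.X : Polynomial ℤ) • (B.map Polynomial.C)).det
    let fblock : Polynomial ℤ :=
      ((P.map Polynomial.C *
          ((B.transpose.map Polynomial.C) - (Polynomial.X : Polynomial ℤ) • (B.map Polynomial.C)) *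
          (P.map Polynomial.C).transpose).toBlocks₁₂).det
    ∃ f : LaurentPolynomial ℤ,
      (∃ (ε : ℤ) (j : ℤ), (ε = 1 ∨ ε = -1) ∧
        f = ε • (T j * Polynomial.toLaurent fblock)) ∧
      ∃ ε' : ℤ, (ε' = 1 ∨ ε' = -1) ∧
        Polynomial.toLaurent Δ = ε' • (T (g : ℤ) * f * laurentInvert f) := by
  intro Δ fblock
  classical
  set e : Equiv.Perm (Fin g ⊕ Fin g) := Equiv.sumComm (Fin g) (Fin g) with he
  have hperm := Matrix.det_permute' e (NL g B P)
  have hsub : (NL g B P).submatrix id ⇑e =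
      Matrix.fromBlocks ((NL g B P).toBlocks₁₂) 0 ((NL g B P).toBlocks₂₂)
        ((NL g B P).toBlocks₂₁) := by
    conv_lhs => rw [← Matrix.fromBlocks_toBlocks (NL g B P), h11 g B P hmeta]
    rw [he, Equiv.sumComm_apply, Matrix.fromBlocks_submatrix_sum_swap_right,
      Matrix.submatrix_id_id]
  rw [hsub, Matrix.det_fromBlocks_zero₁₂] at hperm
  have hfb : Polynomial.toLaurent fblock = ((NL g B P).toBlocks₁₂).det := by
    show Polynomial.toLaurent ((P.map Polynomial.C *
          ((B.transpose.map Polynomial.C) - (Polynomial.X : Polynomial ℤ) • (B.map Polynomial.C)) *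
          (P.map Polynomial.C).transpose).toBlocks₁₂).det = _
    rw [RingHom.map_det, RingHom.mapMatrix_apply]
    congr 1
    rw [show ((P.map Polynomial.C *
          ((B.transpose.map Polynomial.C) - (Polynomial.X : Polynomial ℤ) • (B.map Polynomial.C)) *
          (P.map Polynomial.C).transpose).toBlocks₁₂).map Polynomial.toLaurent
        = ((P.map Polynomial.C *
          ((B.transpose.map Polynomial.C) - (Polynomial.X : Polynomial ℤ) • (B.map Polynomial.C)) *
          (P.map Polynomial.C).transpose).map Polynomial.toLaurent).toBlocks₁₂ from rfl, hMN]
  have hΔ : Polynomial.toLaurent Δ = (NL g B P).det := by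
    rw [hdetN g B P hP]
  have key : (NL g B P).det = ((Equiv.Perm.sign e : ℤ) : LL) *
      ((-1 : LL) ^ g * (T (g : ℤ) * ((NL g B P).toBlocks₁₂).det
        * sigL (((NL g B P).toBlocks₁₂).det))) := by
    rw [h21det] at hperm
    rcases Int.units_eq_one_or (Equiv.Perm.sign e) with h | h <;> rw [h] at hperm ⊢ <;>
      push_cast at hperm ⊢
    · linear_combination -hperm
    · linear_combination hperm
  refine ⟨Polynomial.toLaurent fblock,
    ⟨1, 0, Or.inl rfl, by rw [T_zero, one_smul, one_mul]⟩,
    (Equiv.Perm.sign e : ℤ) * (-1) ^ g, ?_, ?_⟩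
  · have h1 : ((Equiv.Perm.sign e : ℤ) = 1 ∨ (Equiv.Perm.sign e : ℤ) = -1) := by
      rcases Int.units_eq_one_or (Equiv.Perm.sign e) with h | h <;> rw [h] <;> simp
    have h2 := neg_one_pow_eq_or ℤ g
    rcases h1 with h1 | h1 <;> rcases h2 with h2 | h2 <;> rw [h1, h2] <;> norm_num
  · rw [show laurentInvert (Polynomial.toLaurent fblock) = sigL (Polynomial.toLaurent fblock)
      from rfl, hfb, hΔ, key, zsmul_eq_mul]
    push_cast
    ring
end
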